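/- arXiv:2110.15466 — 2 statements merged into one kernel-verified Lean document; each statement's English description precedes it below -/
import Mathlib

section
/- Let H be a Hermitian matrix on ℂ^d with ‖H‖ ≤ b for some b ≥ 1, and let δ ∈ (0,1). Let k be an integer with k ≥ (5b + log(1/δ))/log(2), i.e., large enough that max_{x∈[-b,b]} |e^x − T_k(x)| ≤ δe^{-b} where T_k(x) = ∑_{p=0}^k x^p/p!. Then the matrix A = T_k(H) = ∑_{p=0}^k H^p/p! is positive semidefinite and satisfies (1−δ) Tr(e^H) ≤ Tr(A) ≤ (1+δ) Tr(e^H). -/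
open scoped ComplexOrder

noncomputable section

/-- The operator (spectral) norm of a matrix, i.e. the norm of the induced operator
on Euclidean space. -/
noncomputable def opNorm {m : Type*} [Fintype m] [DecidableEq m] (M : Matrix m m ℂ) : ℝ :=
  ‖Matrix.toEuclideanCLM (𝕜 := ℂ) M‖

open Finset in
private theorem taylor_tail_bound' (b δ : ℝ) (hb : 1 ≤ b) (hδ0 : 0 < δ) (hδ1 : δ < 1) (k : ℕ)
    (hk : (5 * b + Real.log (1 / δ)) / Real.log 2 ≤ (k : ℝ)) :
    ∀ x : ℝ, |x| ≤ b →
      |Real.exp x - ∑ p ∈ range (k + 1), x ^ p / p.factorial| ≤ δ * Real.exp (-b) := by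
  have hb0 : (0:ℝ) < b := lt_of_lt_of_le one_pos hb
  have hlog2 : (0:ℝ) < Real.log 2 := Real.log_pos (by norm_num)
  have hk1 : 5 * b + Real.log (1 / δ) ≤ k * Real.log 2 := by
    rw [div_le_iff₀ hlog2] at hk; linarith
  have hlogδ : 0 < Real.log (1 / δ) := Real.log_pos (by rw [lt_div_iff₀ hδ0]; linarith)
  have hke : 2 * Real.exp 1 * b ≤ (k : ℝ) := by
    have h1 : 5 * b ≤ (k:ℝ) * Real.log 2 := by linarith
    have h2 : (k:ℝ) * Real.log 2 ≤ (k:ℝ) * 0.6931471808 := by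
      apply mul_le_mul_of_nonneg_left Real.log_two_lt_d9.le (Nat.cast_nonneg k)
    nlinarith [Real.exp_one_lt_d9]
  have hfact : ((k+1:ℕ):ℝ) ^ (k+1) ≤ Real.exp 1 ^ (k+1) * ((k+1).factorial : ℝ) := by
    have h1 : ((k+1:ℕ):ℝ) ^ (k+1) / ((k+1).factorial : ℝ) ≤ Real.exp ((k+1:ℕ):ℝ) := by
      refine le_trans ?_ (Real.sum_le_exp_of_nonneg (by positivity) (k+2))
      exact Finset.single_le_sum (f := fun i => ((k+1:ℕ):ℝ)^i / i.factorial)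
        (fun i _ => by positivity) (by simp : k+1 ∈ range (k+2))
    have h2 : Real.exp ((k+1:ℕ):ℝ) = Real.exp 1 ^ (k+1) := by
      rw [← Real.exp_nat_mul]; norm_num
    rw [div_le_iff₀ (by positivity)] at h1
    rw [← h2]; linarith
  have hterm : b ^ (k+1) / ((k+1).factorial : ℝ) ≤ (1/2) ^ (k+1) := by
    have hek : Real.exp 1 * b / ((k:ℝ)+1) ≤ 1/2 := by
      rw [div_le_iff₀ (by positivity)]
      nlinarith [Real.exp_one_lt_d9]
    have h0 : (0:ℝ) ≤ Real.exp 1 * b / ((k:ℝ)+1) := by positivity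
    calc b ^ (k+1) / ((k+1).factorial : ℝ)
        ≤ (Real.exp 1 * b / ((k:ℝ)+1)) ^ (k+1) := by
          rw [div_le_iff₀ (by positivity), div_pow, div_mul_eq_mul_div, le_div_iff₀ (by positivity)]
          calc b ^ (k+1) * ((k:ℝ)+1)^(k+1) = ((k+1:ℕ):ℝ)^(k+1) * b^(k+1) := by push_cast; ring
            _ ≤ Real.exp 1 ^ (k+1) * ((k+1).factorial : ℝ) * b^(k+1) := by
                apply mul_le_mul_of_nonneg_right hfact (by positivity)
            _ = (Real.exp 1 * b)^(k+1) * ((k+1).factorial : ℝ) := by rw [mul_pow]; ring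
      _ ≤ (1/2 : ℝ) ^ (k+1) := pow_le_pow_left₀ h0 hek _
  have h2k : Real.exp (2*b) / δ ≤ 2 ^ (k+1) := by
    have h1 : Real.exp (2*b + Real.log (1/δ)) ≤ Real.exp ((k:ℝ) * Real.log 2) :=
      Real.exp_le_exp.mpr (by linarith)
    have h2 : Real.exp ((k:ℝ) * Real.log 2) = 2 ^ k := by
      rw [Real.exp_nat_mul, Real.exp_log (by norm_num)]
    have h3 : Real.exp (2*b + Real.log (1/δ)) = Real.exp (2*b) / δ := by
      rw [Real.exp_add, Real.exp_log (by positivity), one_div, ← div_eq_mul_inv]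
    rw [h3, h2] at h1
    calc Real.exp (2*b)/δ ≤ (2:ℝ)^k := h1
      _ ≤ 2^(k+1) := by
          rw [pow_succ]
          nlinarith [pow_pos (show (0:ℝ)<2 by norm_num) k]
  intro x hx
  have hsum : Summable (fun p => x ^ p / (p.factorial : ℝ)) := Real.summable_pow_div_factorial x
  have hexp : Real.exp x = ∑' p, x ^ p / (p.factorial : ℝ) := by
    rw [Real.exp_eq_exp_ℝ, NormedSpace.exp_eq_tsum_div]
  have htail : Real.exp x - ∑ p ∈ range (k+1), x ^ p / p.factorial
      = ∑' i, x ^ (i + (k+1)) / ((i + (k+1)).factorial : ℝ) := by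
    rw [hexp, ← Summable.sum_add_tsum_nat_add (k+1) hsum]; ring
  rw [htail]
  have hgsum : HasSum (fun i : ℕ => b^(k+1)/((k+1).factorial:ℝ) * (b^i / (i.factorial:ℝ)))
      (b^(k+1)/((k+1).factorial:ℝ) * Real.exp b) := by
    have : Real.exp b = ∑' i, b ^ i / (i.factorial : ℝ) := by
      rw [Real.exp_eq_exp_ℝ, NormedSpace.exp_eq_tsum_div]
    rw [this]
    exact (Real.summable_pow_div_factorial b).hasSum.mul_left _
  have hbound : ∀ i : ℕ, ‖x ^ (i + (k+1)) / ((i + (k+1)).factorial : ℝ)‖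
      ≤ b^(k+1)/((k+1).factorial:ℝ) * (b^i / (i.factorial:ℝ)) := by
    intro i
    rw [Real.norm_eq_abs, abs_div, abs_pow, Nat.abs_cast]
    have h1 : |x| ^ (i + (k+1)) ≤ b ^ (i + (k+1)) :=
      pow_le_pow_left₀ (abs_nonneg x) hx _
    have h2 : ((k+1).factorial : ℝ) * (i.factorial:ℝ) ≤ ((i + (k+1)).factorial : ℝ) := by
      exact_mod_cast Nat.le_of_dvd (Nat.factorial_pos _)
        (by simpa [add_comm] using Nat.factorial_mul_factorial_dvd_factorial_add (k+1) i)
    calc |x| ^ (i + (k+1)) / ((i + (k+1)).factorial : ℝ)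
        ≤ b ^ (i + (k+1)) / ((i + (k+1)).factorial : ℝ) := by
          apply div_le_div_of_nonneg_right h1 (by positivity) |>.trans_eq rfl
      _ ≤ b ^ (i + (k+1)) / (((k+1).factorial : ℝ) * (i.factorial:ℝ)) := by
          apply div_le_div_of_nonneg_left (by positivity) (by positivity) h2
      _ = b^(k+1)/((k+1).factorial:ℝ) * (b^i / (i.factorial:ℝ)) := by
          rw [pow_add]; field_simp
  have hmain := tsum_of_norm_bounded hgsum hbound
  rw [Real.norm_eq_abs] at hmain
  refine hmain.trans ?_
  calc b^(k+1)/((k+1).factorial:ℝ) * Real.exp b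
      ≤ (1/2)^(k+1) * Real.exp b := by
        apply mul_le_mul_of_nonneg_right hterm (Real.exp_nonneg b)
    _ ≤ (δ * Real.exp (-(2*b))) * Real.exp b := by
        apply mul_le_mul_of_nonneg_right _ (Real.exp_nonneg b)
        rw [div_le_iff₀ hδ0] at h2k
        have h2pos : (0:ℝ) < 2^(k+1) := by positivity
        rw [one_div, inv_pow, ← one_div]
        rw [div_le_iff₀ h2pos, Real.exp_neg]
        calc (1:ℝ) = Real.exp (2*b) * (Real.exp (2*b))⁻¹ := by
              rw [mul_inv_cancel₀ (Real.exp_ne_zero _)]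
          _ ≤ 2^(k+1) * δ * (Real.exp (2*b))⁻¹ := by
              apply mul_le_mul_of_nonneg_right _ (by positivity)
              linarith
          _ = δ * (Real.exp (2*b))⁻¹ * 2^(k+1) := by ring
    _ = δ * Real.exp (-b) := by
        rw [mul_assoc, ← Real.exp_add]; ring_nf

private theorem eigenvalue_abs_le' {d : ℕ} (H : Matrix (Fin d) (Fin d) ℂ) (hH : H.IsHermitian)
    (b : ℝ) (hnorm : opNorm H ≤ b) (i : Fin d) : |hH.eigenvalues i| ≤ b := by
  have hnv : ‖hH.eigenvectorBasis i‖ = 1 := hH.eigenvectorBasis.orthonormal.1 i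
  have h1 : Matrix.toEuclideanCLM (𝕜 := ℂ) H (hH.eigenvectorBasis i)
      = (hH.eigenvalues i : ℂ) • (hH.eigenvectorBasis i) := by
    apply (WithLp.equiv 2 (Fin d → ℂ)).injective
    simp only [WithLp.equiv_apply, Matrix.ofLp_toEuclideanCLM]
    rw [hH.mulVec_eigenvectorBasis]
    ext j
    simp [Complex.real_smul]
  have h4 : ‖Matrix.toEuclideanCLM (𝕜 := ℂ) H (hH.eigenvectorBasis i)‖
      ≤ opNorm H * ‖hH.eigenvectorBasis i‖ :=
    (Matrix.toEuclideanCLM (𝕜 := ℂ) H).le_opNorm _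
  rw [h1, norm_smul] at h4
  have h5 : ‖(hH.eigenvalues i : ℂ)‖ = |hH.eigenvalues i| := by simp
  rw [hnv, h5, mul_one, mul_one] at h4
  exact h4.trans hnorm

/-- **Taylor truncation of the matrix exponential.**
Let `H` be Hermitian on `ℂ^d` with `‖H‖ ≤ b` for some `b ≥ 1` and let `δ ∈ (0,1)`.
If `k ≥ (5b + log(1/δ))/log 2` (which makes `max_{x∈[-b,b]}|e^x − T_k(x)| ≤ δe^{-b}`),
then `A = T_k(H) = ∑_{p=0}^k H^p/p!` is positive semidefinite and
`(1−δ) Tr(e^H) ≤ Tr(A) ≤ (1+δ) Tr(e^H)`. -/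
theorem matrix_exp_taylor_truncation {d : ℕ} (H : Matrix (Fin d) (Fin d) ℂ)
    (hH : H.IsHermitian) (b δ : ℝ) (hb : 1 ≤ b) (hnorm : opNorm H ≤ b)
    (hδ : δ ∈ Set.Ioo (0 : ℝ) 1) (k : ℕ)
    (hk : (5 * b + Real.log (1 / δ)) / Real.log 2 ≤ (k : ℝ)) :
    (∑ p ∈ Finset.range (k + 1), ((p.factorial : ℂ))⁻¹ • H ^ p).PosSemidef ∧
    (1 - δ) * ((NormedSpace.exp H).trace).re
      ≤ ((∑ p ∈ Finset.range (k + 1), ((p.factorial : ℂ))⁻¹ • H ^ p).trace).re ∧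
    ((∑ p ∈ Finset.range (k + 1), ((p.factorial : ℂ))⁻¹ • H ^ p).trace).re
      ≤ (1 + δ) * ((NormedSpace.exp H).trace).re := by
  obtain ⟨hδ0, hδ1⟩ := hδ
  set U : Matrix (Fin d) (Fin d) ℂ := (hH.eigenvectorUnitary : Matrix (Fin d) (Fin d) ℂ) with hU
  set ev : Fin d → ℝ := hH.eigenvalues with hev
  set T : ℝ → ℝ := fun x => ∑ p ∈ Finset.range (k + 1), x ^ p / (p.factorial : ℝ) with hT
  have hsU : star U * U = 1 := (Unitary.mem_iff.mp hH.eigenvectorUnitary.2).1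
  have hUs : U * star U = 1 := (Unitary.mem_iff.mp hH.eigenvectorUnitary.2).2
  set D : Matrix (Fin d) (Fin d) ℂ := Matrix.diagonal (fun i => (ev i : ℂ)) with hD
  have hspec : H = U * D * star U := by
    convert hH.spectral_theorem using 2
    rw [Unitary.conjStarAlgAut_apply]; rfl
  have hpow : ∀ p : ℕ, H ^ p = U * D ^ p * star U := by
    intro p
    induction p with
    | zero => simp [pow_zero, hUs]
    | succ p ih =>
        rw [pow_succ, ih, hspec, pow_succ]
        calc U * D ^ p * star U * (U * D * star U)
            = U * D ^ p * (star U * U) * D * star U := by noncomm_ring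
          _ = U * D ^ p * 1 * D * star U := by rw [hsU]
          _ = U * (D ^ p * D) * star U := by noncomm_ring
  have hsum : (∑ p ∈ Finset.range (k + 1), ((p.factorial : ℂ))⁻¹ • H ^ p)
      = U * Matrix.diagonal (fun i => ((T (ev i) : ℝ) : ℂ)) * star U := by
    have h1 : ∀ p ∈ Finset.range (k+1), ((p.factorial : ℂ))⁻¹ • H ^ p
        = U * (((p.factorial : ℂ))⁻¹ • D ^ p) * star U := by
      intro p _
      rw [hpow p, Matrix.mul_smul, Matrix.smul_mul]
    rw [Finset.sum_congr rfl h1, ← Finset.sum_mul, ← Finset.mul_sum]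
    have h2 : ∀ p : ℕ, ((p.factorial : ℂ))⁻¹ • D ^ p
        = Matrix.diagonal (fun i => (ev i : ℂ) ^ p / (p.factorial : ℂ)) := by
      intro p
      rw [hD, Matrix.diagonal_pow]
      ext i j
      by_cases h : i = j
      · subst h; simp [div_eq_mul_inv, mul_comm]
      · simp [Matrix.diagonal_apply_ne _ h]
    have diag_sum : ∑ p ∈ Finset.range (k+1),
        Matrix.diagonal (fun i => (ev i : ℂ) ^ p / (p.factorial : ℂ))
        = Matrix.diagonal (fun i => ∑ p ∈ Finset.range (k+1),
            (ev i : ℂ) ^ p / (p.factorial : ℂ)) := by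
      ext i j
      rw [Matrix.sum_apply]
      by_cases h : i = j
      · subst h; simp
      · simp [Matrix.diagonal_apply_ne _ h]
    simp_rw [h2]
    rw [diag_sum]
    congr 2
    funext i
    rw [hT]
    push_cast
    rfl
  have hexp : NormedSpace.exp H
      = U * Matrix.diagonal (fun i => ((Real.exp (ev i) : ℝ) : ℂ)) * star U := by
    have hUnit : IsUnit U := by
      apply (Matrix.isUnit_iff_isUnit_det U).mpr
      exact IsUnit.of_mul_eq_one _ (by rw [← Matrix.det_mul, hUs, Matrix.det_one])
    have hinv : U⁻¹ = star U := Matrix.inv_eq_right_inv hUs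
    rw [hspec, ← hinv, Matrix.exp_conj U D hUnit, hinv]
    congr 1
    congr 1
    rw [hD, Matrix.exp_diagonal]
    have he : (NormedSpace.exp fun i => ((ev i : ℂ))) = fun i => ((Real.exp (ev i) : ℝ) : ℂ) := by
      funext i
      rw [Pi.coe_exp, ← Complex.exp_eq_exp_ℂ, Complex.ofReal_exp]
    rw [he]
  -- trace of a conjugated diagonal
  have htr : ∀ v : Fin d → ℂ, (U * Matrix.diagonal v * star U).trace = ∑ i, v i := by
    intro v
    rw [Matrix.trace_mul_cycle, hsU, Matrix.one_mul, Matrix.trace_diagonal]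
  -- scalar estimates
  have hevb : ∀ i, |ev i| ≤ b := fun i => eigenvalue_abs_le' H hH b hnorm i
  have hest : ∀ i, |Real.exp (ev i) - T (ev i)| ≤ δ * Real.exp (-b) :=
    fun i => taylor_tail_bound' b δ hb hδ0 hδ1 k hk (ev i) (hevb i)
  have hkey : ∀ i, (1 - δ) * Real.exp (ev i) ≤ T (ev i)
      ∧ T (ev i) ≤ (1 + δ) * Real.exp (ev i) := by
    intro i
    have h1 := abs_le.mp (hest i)
    have h2 : Real.exp (-b) ≤ Real.exp (ev i) :=
      Real.exp_le_exp.mpr (neg_le_of_abs_le (hevb i))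
    have h3 : δ * Real.exp (-b) ≤ δ * Real.exp (ev i) :=
      mul_le_mul_of_nonneg_left h2 hδ0.le
    constructor <;> nlinarith
  have hTpos : ∀ i, 0 ≤ T (ev i) := by
    intro i
    have := (hkey i).1
    nlinarith [Real.exp_pos (ev i), hδ1]
  -- PosSemidef
  have hPSD : (∑ p ∈ Finset.range (k + 1), ((p.factorial : ℂ))⁻¹ • H ^ p).PosSemidef := by
    rw [hsum, Matrix.star_eq_conjTranspose]
    apply Matrix.PosSemidef.mul_mul_conjTranspose_same
    rw [Matrix.posSemidef_diagonal_iff]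
    intro i
    exact_mod_cast Complex.zero_le_real.mpr (hTpos i)
  refine ⟨hPSD, ?_, ?_⟩ <;>
  · rw [hsum, hexp, htr, htr]
    have e1 : (∑ i, ((T (ev i) : ℝ) : ℂ)).re = ∑ i, T (ev i) := by
      rw [← Complex.ofReal_sum, Complex.ofReal_re]
    have e2 : (∑ i, ((Real.exp (ev i) : ℝ) : ℂ)).re = ∑ i, Real.exp (ev i) := by
      rw [← Complex.ofReal_sum, Complex.ofReal_re]
    rw [e1, e2, Finset.mul_sum]
    apply Finset.sum_le_sum
    intro i _
    first
      | exact (hkey i).1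
      | exact (hkey i).2

end
end

section
/- Let H = ∑_{l=1}^L γ_l Π_l be an operator on a finite-dimensional Hilbert space 𝓗, where each Π_l is an orthogonal projector, γ_l ≥ 0, and ∑_l γ_l = 1. Define the operator H' on 𝓗 ⊗ ℂ^{L+1} by H' = ∑_{l=1}^L √γ_l · Π_l ⊗ ( |l⟩⟨0| + |0⟩⟨l| ), where {|0⟩,|1⟩,…,|L⟩} is an orthonormal basis of ℂ^{L+1}. Then for every natural number k, (I ⊗ ⟨0|) H'^{2k} (I ⊗ |0⟩) = H^k, and consequently for every β ≥ 0, (I ⊗ ⟨0|) e^{-β H'²/2} (I ⊗ |0⟩) = e^{-βH/2}. -/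
open scoped Kronecker

noncomputable section

/-- Compression `(I ⊗ ⟨0|) M (I ⊗ |0⟩)` of an operator on `𝓗 ⊗ ℂ^{L+1}` to the
subspace `𝓗 ⊗ |0⟩`, viewed as an operator on `𝓗`. -/
noncomputable def ancillaCompress {ι : Type*} {L : ℕ}
    (M : Matrix (ι × Fin (L + 1)) (ι × Fin (L + 1)) ℂ) : Matrix ι ι ℂ :=
  Matrix.of fun a b => M (a, 0) (b, 0)

lemma ancillaCompress_one {ι : Type*} [Fintype ι] [DecidableEq ι] {L : ℕ} :
    ancillaCompress (1 : Matrix (ι × Fin (L + 1)) (ι × Fin (L + 1)) ℂ) = 1 := by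
  ext a b
  simp [ancillaCompress, Matrix.one_apply, Prod.ext_iff]

lemma ancillaCompress_pow {ι : Type*} [Fintype ι] [DecidableEq ι] {L : ℕ}
    (M : Matrix (ι × Fin (L + 1)) (ι × Fin (L + 1)) ℂ)
    (hM : ∀ a (j : Fin (L + 1)) b, j ≠ 0 → M (a, j) (b, 0) = 0) (k : ℕ) :
    ancillaCompress (M ^ k) = ancillaCompress M ^ k := by
  induction k with
  | zero => simpa using ancillaCompress_one
  | succ k ih =>
    rw [pow_succ, pow_succ, ← ih]
    ext a b
    show (M ^ k * M) (a, 0) (b, 0) = _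
    rw [Matrix.mul_apply, Fintype.sum_prod_type]
    have h : ∀ c : ι, ∑ j : Fin (L + 1), (M ^ k) (a, 0) (c, j) * M (c, j) (b, 0)
        = (M ^ k) (a, 0) (c, 0) * M (c, 0) (b, 0) := fun c =>
      Fintype.sum_eq_single 0 (fun j hj => by rw [hM c j b hj, mul_zero])
    simp_rw [h]
    simp [Matrix.mul_apply, ancillaCompress]

noncomputable def ancillaCompressLM (ι : Type*) [Fintype ι] (L : ℕ) :
    Matrix (ι × Fin (L + 1)) (ι × Fin (L + 1)) ℂ →ₗ[ℂ] Matrix ι ι ℂ where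
  toFun := ancillaCompress
  map_add' _ _ := rfl
  map_smul' _ _ := rfl

lemma ancillaCompress_exp {ι : Type*} [Fintype ι] [DecidableEq ι] {L : ℕ}
    (M : Matrix (ι × Fin (L + 1)) (ι × Fin (L + 1)) ℂ)
    (hM : ∀ a (j : Fin (L + 1)) b, j ≠ 0 → M (a, j) (b, 0) = 0) :
    ancillaCompress (NormedSpace.exp M) = NormedSpace.exp (ancillaCompress M) := by
  letI : SeminormedRing (Matrix (ι × Fin (L + 1)) (ι × Fin (L + 1)) ℂ) :=
    Matrix.linftyOpSemiNormedRing
  letI : NormedRing (Matrix (ι × Fin (L + 1)) (ι × Fin (L + 1)) ℂ) :=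
    Matrix.linftyOpNormedRing
  letI : NormedAlgebra ℂ (Matrix (ι × Fin (L + 1)) (ι × Fin (L + 1)) ℂ) :=
    Matrix.linftyOpNormedAlgebra
  have hsum : Summable fun n : ℕ => ((n.factorial : ℂ)⁻¹) • M ^ n :=
    NormedSpace.expSeries_summable' M
  rw [NormedSpace.exp_eq_tsum ℂ, NormedSpace.exp_eq_tsum ℂ]
  have htsum := (LinearMap.toContinuousLinearMap (ancillaCompressLM ι L)).map_tsum hsum
  rw [show ancillaCompress (∑' n : ℕ, ((n.factorial : ℂ)⁻¹) • M ^ n)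
      = (LinearMap.toContinuousLinearMap (ancillaCompressLM ι L))
          (∑' n : ℕ, ((n.factorial : ℂ)⁻¹) • M ^ n) from rfl, htsum]
  refine tsum_congr fun n => ?_
  show ancillaCompress (((n.factorial : ℂ)⁻¹) • M ^ n) = _
  rw [show ancillaCompress (((n.factorial : ℂ)⁻¹) • M ^ n)
      = ((n.factorial : ℂ)⁻¹) • ancillaCompress (M ^ n) from rfl,
    ancillaCompress_pow M hM n]

/-- **An effective square root of a sum of projectors.**
Let `H = ∑_l γ_l Π_l` with each `Π_l` an orthogonal projector, `γ_l ≥ 0`, `∑_l γ_l = 1`,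
and define `H' = ∑_l √γ_l · Π_l ⊗ (|l⟩⟨0| + |0⟩⟨l|)` on `𝓗 ⊗ ℂ^{L+1}`.  Then
`(I ⊗ ⟨0|) H'^{2k} (I ⊗ |0⟩) = H^k` for every `k`, and consequently
`(I ⊗ ⟨0|) e^{-β H'²/2} (I ⊗ |0⟩) = e^{-βH/2}` for every `β ≥ 0`. -/
theorem effective_square_root {ι : Type*} [Fintype ι] [DecidableEq ι] (L : ℕ)
    (γ : Fin L → ℝ) (Pr : Fin L → Matrix ι ι ℂ)
    (hγ0 : ∀ l, 0 ≤ γ l) (hγ1 : ∑ l, γ l = 1)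
    (hherm : ∀ l, (Pr l).IsHermitian) (hproj : ∀ l, Pr l * Pr l = Pr l) :
    ∀ (H : Matrix ι ι ℂ) (H' : Matrix (ι × Fin (L + 1)) (ι × Fin (L + 1)) ℂ),
      H = ∑ l, (γ l : ℂ) • Pr l →
      H' = ∑ l, ((Real.sqrt (γ l) : ℝ) : ℂ) •
        (Pr l ⊗ₖ (Matrix.single l.succ 0 (1 : ℂ)
          + Matrix.single 0 l.succ (1 : ℂ))) →
      (∀ k : ℕ, ancillaCompress (H' ^ (2 * k)) = H ^ k) ∧
      (∀ β : ℝ, 0 ≤ β →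
        ancillaCompress (NormedSpace.exp (-(((β / 2 : ℝ)) : ℂ) • (H' * H')))
          = NormedSpace.exp (-(((β / 2 : ℝ)) : ℂ) • H)) := by
  intro H H' hH hH'
  -- the ancilla-space products of the standard basis matrices
  have hE : ∀ (l m : Fin L) (j : Fin (L + 1)),
      (((Matrix.single l.succ 0 (1 : ℂ) + Matrix.single 0 l.succ 1) *
        (Matrix.single m.succ 0 (1 : ℂ) + Matrix.single 0 m.succ 1))
        : Matrix (Fin (L + 1)) (Fin (L + 1)) ℂ) j 0
      = if l = m ∧ j = 0 then 1 else 0 := by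
    intro l m j
    simp [Matrix.mul_apply, Matrix.single, Matrix.add_apply, Fin.succ_ne_zero,
      (Fin.succ_ne_zero _).symm, Fin.succ_inj, eq_comm, ite_and, Finset.sum_ite_eq,
      Finset.sum_ite_eq']
    by_cases h : l = m <;> simp [h]
  -- the key entrywise computation for `H' * H'`
  have key : ∀ (a : ι) (j : Fin (L + 1)) (b : ι),
      (H' * H') (a, j) (b, 0) = if j = 0 then H a b else 0 := by
    intro a j b
    have hmul : H' * H' = ∑ l, ∑ m,
        (((Real.sqrt (γ l) : ℝ) : ℂ) * ((Real.sqrt (γ m) : ℝ) : ℂ)) •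
          ((Pr l * Pr m) ⊗ₖ
            ((Matrix.single l.succ 0 (1 : ℂ) + Matrix.single 0 l.succ 1) *
             (Matrix.single m.succ 0 (1 : ℂ) + Matrix.single 0 m.succ 1))) := by
      rw [hH', Finset.sum_mul_sum]
      simp_rw [Matrix.smul_mul, Matrix.mul_smul, smul_smul, Matrix.mul_kronecker_mul]
    rw [hmul]
    simp only [Matrix.sum_apply, Matrix.smul_apply, Matrix.kroneckerMap_apply, smul_eq_mul]
    simp_rw [hE]
    by_cases hj : j = 0
    · subst hj
      simp only [and_true, mul_ite, mul_one, mul_zero, Finset.sum_ite_eq, Finset.mem_univ,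
        if_true]
      rw [hH]
      simp only [Matrix.sum_apply, Matrix.smul_apply, smul_eq_mul]
      refine Finset.sum_congr rfl fun l _ => ?_
      rw [hproj l, ← Complex.ofReal_mul, Real.mul_self_sqrt (hγ0 l)]
    · simp [hj]
  have hblock : ∀ a (j : Fin (L + 1)) b, j ≠ 0 → (H' * H') (a, j) (b, 0) = 0 := by
    intro a j b hj
    rw [key]; simp [hj]
  have hcomp : ancillaCompress (H' * H') = H := by
    ext a b
    show (H' * H') (a, 0) (b, 0) = H a b
    rw [key]; simp
  constructor
  · intro k
    rw [pow_mul, pow_two, ancillaCompress_pow (H' * H') hblock k, hcomp]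
  · intro β _
    have hblock' : ∀ a (j : Fin (L + 1)) b, j ≠ 0 →
        ((-(((β / 2 : ℝ)) : ℂ) • (H' * H')) (a, j) (b, 0)) = 0 := by
      intro a j b hj
      show -(((β / 2 : ℝ)) : ℂ) * (H' * H') (a, j) (b, 0) = 0
      rw [hblock a j b hj, mul_zero]
    rw [ancillaCompress_exp _ hblock']
    congr 1
    rw [show ancillaCompress (-(((β / 2 : ℝ)) : ℂ) • (H' * H'))
        = -(((β / 2 : ℝ)) : ℂ) • ancillaCompress (H' * H') from rfl, hcomp]

end
end
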